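/- The reputation map F : [0,1]^m → [0,1]^m defined by F(r)_j = Σ_{i: i→j}(c₀ − d_i(r)) E_{ij} / Σ_{i: i→j}(c₀ − d_i(r)) (for c₀ > 1) is continuous, and hence has at least one fixed point in [0,1]^m. -/
import Mathlib



noncomputable def repS {n m : ℕ} (A : Fin n → Fin m → Bool) (E : Fin n → Fin m → ℝ)
    (r : Fin m → ℝ) (i : Fin n) : ℝ :=
  ∑ j ∈ Finset.univ.filter (fun j => A i j = true), (E i j - r j) ^ 2

noncomputable def repH {n m : ℕ} (A : Fin n → Fin m → Bool) (E : Fin n → Fin m → ℝ)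
    (c₀ : ℝ) (r : Fin m → ℝ) : ℝ :=
  ∑ i : Fin n, (c₀ * repS A E r i -
    (repS A E r i) ^ 2 / (2 * ((Finset.univ.filter (fun j => A i j = true)).card : ℝ)))

theorem reputation_map_continuous_and_fixed_point
    (n m : ℕ) (A : Fin n → Fin m → Bool) (E : Fin n → Fin m → ℝ) (c₀ : ℝ)
    (hc : 1 < c₀)
    (hE : ∀ i j, E i j ∈ Set.Icc (0:ℝ) 1)
    (hm : ∀ i : Fin n, 1 ≤ (Finset.univ.filter (fun j => A i j = true)).card)
    (hn : ∀ j : Fin m, 1 ≤ (Finset.univ.filter (fun i => A i j = true)).card)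
    (d : (Fin m → ℝ) → Fin n → ℝ)
    (hd : ∀ r i, d r i = (1 / ((Finset.univ.filter (fun j => A i j = true)).card : ℝ)) *
      ∑ j ∈ Finset.univ.filter (fun j => A i j = true), (E i j - r j) ^ 2)
    (F : (Fin m → ℝ) → (Fin m → ℝ))
    (hF : ∀ r j, F r j =
      (∑ i ∈ Finset.univ.filter (fun i => A i j = true), (c₀ - d r i) * E i j) /
      (∑ i ∈ Finset.univ.filter (fun i => A i j = true), (c₀ - d r i))) :
    ContinuousOn F (Set.Icc 0 1) ∧
    ∃ r ∈ Set.Icc (0 : Fin m → ℝ) 1, F r = r := by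
  classical
  have hcard : ∀ i : Fin n, (0:ℝ) < ((Finset.univ.filter (fun j => A i j = true)).card : ℝ) := by
    intro i
    exact_mod_cast Nat.lt_of_lt_of_le Nat.zero_lt_one (hm i)
  -- bounds for d on the box
  have hdbound : ∀ r : Fin m → ℝ, r ∈ Set.Icc (0:Fin m → ℝ) 1 → ∀ i, 0 ≤ d r i ∧ d r i ≤ 1 := by
    intro r hr i
    rw [Set.mem_Icc] at hr
    have h0 : ∀ k, 0 ≤ r k := fun k => by simpa using Pi.le_def.1 hr.1 k
    have h1 : ∀ k, r k ≤ 1 := fun k => by simpa using Pi.le_def.1 hr.2 k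
    rw [hd]
    constructor
    · apply mul_nonneg (by positivity)
      exact Finset.sum_nonneg fun j _ => sq_nonneg _
    · have hsum : ∑ j ∈ Finset.univ.filter (fun j => A i j = true), (E i j - r j)^2
          ≤ ((Finset.univ.filter (fun j => A i j = true)).card : ℝ) := by
        calc ∑ j ∈ Finset.univ.filter (fun j => A i j = true), (E i j - r j)^2
            ≤ ∑ _j ∈ Finset.univ.filter (fun j => A i j = true), (1:ℝ) := by
              apply Finset.sum_le_sum
              intro j _
              have hEj := hE i j
              rw [Set.mem_Icc] at hEj
              nlinarith [h0 j, h1 j, hEj.1, hEj.2]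
          _ = ((Finset.univ.filter (fun j => A i j = true)).card : ℝ) := by simp
      have hci := hcard i
      calc (1 / ((Finset.univ.filter (fun j => A i j = true)).card : ℝ)) *
            ∑ j ∈ Finset.univ.filter (fun j => A i j = true), (E i j - r j)^2
          ≤ (1 / ((Finset.univ.filter (fun j => A i j = true)).card : ℝ)) *
            ((Finset.univ.filter (fun j => A i j = true)).card : ℝ) := by
            apply mul_le_mul_of_nonneg_left hsum (by positivity)
        _ = 1 := by field_simp
  -- positivity of the denominator
  have hW : ∀ r : Fin m → ℝ, r ∈ Set.Icc (0:Fin m → ℝ) 1 → ∀ j : Fin m,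
      0 < ∑ i ∈ Finset.univ.filter (fun i => A i j = true), (c₀ - d r i) := by
    intro r hr j
    apply Finset.sum_pos
    · intro i _
      linarith [(hdbound r hr i).2]
    · exact Finset.card_pos.1 (Nat.lt_of_lt_of_le Nat.zero_lt_one (hn j))
  -- continuity of d
  have hdc : ∀ i, Continuous fun r : Fin m → ℝ => d r i := by
    intro i
    have : (fun r : Fin m → ℝ => d r i)
        = fun r => (1 / ((Finset.univ.filter (fun j => A i j = true)).card : ℝ)) *
          ∑ j ∈ Finset.univ.filter (fun j => A i j = true), (E i j - r j) ^ 2 :=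
      funext fun r => hd r i
    rw [this]
    exact continuous_const.mul
      (continuous_finset_sum _ fun j _ => (continuous_const.sub (continuous_apply j)).pow 2)
  -- continuity of F on the box
  have hFc : ContinuousOn F (Set.Icc 0 1) := by
    have hFeq : F = fun r j =>
        (∑ i ∈ Finset.univ.filter (fun i => A i j = true), (c₀ - d r i) * E i j) /
        (∑ i ∈ Finset.univ.filter (fun i => A i j = true), (c₀ - d r i)) :=
      funext fun r => funext fun j => hF r j
    rw [hFeq]
    rw [continuousOn_pi]
    intro j
    apply ContinuousOn.div
    · exact (continuous_finset_sum _ fun i _ =>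
        (continuous_const.sub (hdc i)).mul continuous_const).continuousOn
    · exact (continuous_finset_sum _ fun i _ => continuous_const.sub (hdc i)).continuousOn
    · intro r hr
      exact ne_of_gt (hW r hr j)
  refine ⟨hFc, ?_⟩
  -- the potential function
  have hdS : ∀ r i, d r i = repS A E r i / ((Finset.univ.filter (fun j => A i j = true)).card : ℝ) := by
    intro r i
    rw [hd]
    simp only [repS]
    ring
  have hSc : ∀ i, Continuous fun r : Fin m → ℝ => repS A E r i := by
    intro i
    simp only [repS]
    exact continuous_finset_sum _ fun j _ => (continuous_const.sub (continuous_apply j)).pow 2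
  have hHc : Continuous (repH A E c₀) := by
    unfold repH
    exact continuous_finset_sum _ fun i _ =>
      (continuous_const.mul (hSc i)).sub (((hSc i).pow 2).div_const _)
  obtain ⟨r, hrbox, hrmin⟩ := isCompact_Icc.exists_isMinOn
    ⟨0, Set.mem_Icc.2 ⟨le_refl _, zero_le_one⟩⟩ hHc.continuousOn
  have hrIcc := hrbox
  rw [Set.mem_Icc] at hrIcc
  have hr0 : ∀ k, 0 ≤ r k := fun k => by simpa using Pi.le_def.1 hrIcc.1 k
  have hr1 : ∀ k, r k ≤ 1 := fun k => by simpa using Pi.le_def.1 hrIcc.2 k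
  -- effect of updating one coordinate on S
  have hSupd : ∀ (j : Fin m) (x : ℝ) (i : Fin n),
      repS A E (Function.update r j x) i
        = repS A E r i + (if A i j = true then ((E i j - x)^2 - (E i j - r j)^2) else 0) := by
    intro j x i
    simp only [repS]
    by_cases hij : A i j = true
    · have hjmem : j ∈ Finset.univ.filter (fun k => A i k = true) :=
        Finset.mem_filter.2 ⟨Finset.mem_univ _, hij⟩
      rw [if_pos hij, ← Finset.add_sum_erase _ _ hjmem, ← Finset.add_sum_erase _ _ hjmem]
      have hcongr : ∀ k ∈ (Finset.univ.filter (fun k => A i k = true)).erase j,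
          (E i k - Function.update r j x k)^2 = (E i k - r k)^2 := by
        intro k hk
        rw [Function.update_of_ne (Finset.ne_of_mem_erase hk)]
      rw [Finset.sum_congr rfl hcongr, Function.update_self]
      ring
    · rw [if_neg hij, add_zero]
      apply Finset.sum_congr rfl
      intro k hk
      have hk' := (Finset.mem_filter.1 hk).2
      have hkj : k ≠ j := fun h => hij (h ▸ hk')
      rw [Function.update_of_ne hkj]
  -- change of H under a one-coordinate update
  have hΔ : ∀ (j : Fin m) (x : ℝ),
      repH A E c₀ (Function.update r j x) - repH A E c₀ r
        = ∑ i ∈ Finset.univ.filter (fun i => A i j = true),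
            ((c₀ - d r i) * ((E i j - x)^2 - (E i j - r j)^2)
              - ((E i j - x)^2 - (E i j - r j)^2)^2
                / (2 * ((Finset.univ.filter (fun k => A i k = true)).card : ℝ))) := by
    intro j x
    have hterm : ∀ i : Fin n,
        (c₀ * repS A E (Function.update r j x) i - (repS A E (Function.update r j x) i)^2
            / (2 * ((Finset.univ.filter (fun k => A i k = true)).card : ℝ)))
          - (c₀ * repS A E r i - (repS A E r i)^2
            / (2 * ((Finset.univ.filter (fun k => A i k = true)).card : ℝ)))
        = (if A i j = true then
            ((c₀ - d r i) * ((E i j - x)^2 - (E i j - r j)^2)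
              - ((E i j - x)^2 - (E i j - r j)^2)^2
                / (2 * ((Finset.univ.filter (fun k => A i k = true)).card : ℝ)))
          else 0) := by
      intro i
      rw [hSupd j x i]
      by_cases hij : A i j = true
      · rw [if_pos hij, if_pos hij, hdS]
        have hc0 : ((Finset.univ.filter (fun k => A i k = true)).card : ℝ) ≠ 0 :=
          ne_of_gt (hcard i)
        field_simp
        ring
      · rw [if_neg hij, if_neg hij]
        ring
    calc repH A E c₀ (Function.update r j x) - repH A E c₀ r
        = ∑ i : Fin n,
            ((c₀ * repS A E (Function.update r j x) i - (repS A E (Function.update r j x) i)^2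
              / (2 * ((Finset.univ.filter (fun k => A i k = true)).card : ℝ)))
            - (c₀ * repS A E r i - (repS A E r i)^2
              / (2 * ((Finset.univ.filter (fun k => A i k = true)).card : ℝ)))) := by
          simp only [repH]
          rw [← Finset.sum_sub_distrib]
      _ = ∑ i : Fin n, (if A i j = true then
            ((c₀ - d r i) * ((E i j - x)^2 - (E i j - r j)^2)
              - ((E i j - x)^2 - (E i j - r j)^2)^2
                / (2 * ((Finset.univ.filter (fun k => A i k = true)).card : ℝ)))
          else 0) := Finset.sum_congr rfl fun i _ => hterm i
      _ = ∑ i ∈ Finset.univ.filter (fun i => A i j = true), (if A i j = true then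
            ((c₀ - d r i) * ((E i j - x)^2 - (E i j - r j)^2)
              - ((E i j - x)^2 - (E i j - r j)^2)^2
                / (2 * ((Finset.univ.filter (fun k => A i k = true)).card : ℝ)))
          else 0) := by
          refine (Finset.sum_subset (Finset.subset_univ _) ?_).symm
          intro i _ hi
          rw [if_neg (by simpa using hi)]
      _ = ∑ i ∈ Finset.univ.filter (fun i => A i j = true),
            ((c₀ - d r i) * ((E i j - x)^2 - (E i j - r j)^2)
              - ((E i j - x)^2 - (E i j - r j)^2)^2
                / (2 * ((Finset.univ.filter (fun k => A i k = true)).card : ℝ))) :=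
          Finset.sum_congr rfl fun i hi => if_pos (Finset.mem_filter.1 hi).2
  -- key first-order condition at the minimizer
  have key : ∀ j : Fin m,
      ∑ i ∈ Finset.univ.filter (fun i => A i j = true), (c₀ - d r i) * (E i j - r j) = 0 := by
    intro j
    set g := ∑ i ∈ Finset.univ.filter (fun i => A i j = true), (c₀ - d r i) * (E i j - r j)
      with hg
    set W := ∑ i ∈ Finset.univ.filter (fun i => A i j = true), (c₀ - d r i) with hWdef
    have hWpos : 0 < W := hW r hrbox j
    have hineq : ∀ x ∈ Set.Icc (0:ℝ) 1, 2*(x - r j)*g ≤ (x - r j)^2 * W := by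
      intro x hx
      rw [Set.mem_Icc] at hx
      have hupd : Function.update r j x ∈ Set.Icc (0:Fin m → ℝ) 1 := by
        rw [Set.mem_Icc]
        constructor <;> rw [Pi.le_def] <;> intro k <;> rw [Function.update_apply] <;>
          split_ifs <;> simp only [Pi.zero_apply, Pi.one_apply]
        · exact hx.1
        · exact hr0 k
        · exact hx.2
        · exact hr1 k
      have h0 : 0 ≤ repH A E c₀ (Function.update r j x) - repH A E c₀ r := sub_nonneg.2 (hrmin hupd)
      rw [hΔ j x] at h0
      have h1 : ∑ i ∈ Finset.univ.filter (fun i => A i j = true),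
            ((c₀ - d r i) * ((E i j - x)^2 - (E i j - r j)^2)
              - ((E i j - x)^2 - (E i j - r j)^2)^2
                / (2 * ((Finset.univ.filter (fun k => A i k = true)).card : ℝ)))
          ≤ ∑ i ∈ Finset.univ.filter (fun i => A i j = true),
            (c₀ - d r i) * ((E i j - x)^2 - (E i j - r j)^2) := by
        apply Finset.sum_le_sum
        intro i _
        have hci := hcard i
        have : 0 ≤ ((E i j - x)^2 - (E i j - r j)^2)^2
            / (2 * ((Finset.univ.filter (fun k => A i k = true)).card : ℝ)) := by positivity
        linarith
      have h2 : ∑ i ∈ Finset.univ.filter (fun i => A i j = true),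
            (c₀ - d r i) * ((E i j - x)^2 - (E i j - r j)^2)
          = (x - r j)^2 * W - 2*(x - r j) * g := by
        rw [hWdef, hg, Finset.mul_sum, Finset.mul_sum, ← Finset.sum_sub_distrib]
        exact Finset.sum_congr rfl fun i _ => by ring
      linarith
    by_contra hgne
    rcases lt_or_gt_of_ne hgne with hneg | hpos
    · -- g < 0 forces r j > 0, then a small decrease of r j decreases H
      have hrj0 : 0 < r j := by
        rcases (hr0 j).lt_or_eq with h | h
        · exact h
        · exfalso
          have hgnn : 0 ≤ g := by
            rw [hg]
            apply Finset.sum_nonneg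
            intro i _
            have hd1 := (hdbound r hrbox i).2
            have hEi := hE i j
            rw [Set.mem_Icc] at hEi
            apply mul_nonneg (by linarith)
            rw [← h]
            linarith [hEi.1]
          linarith
      set h := min (r j) ((-g)/W) with hh
      have hhpos : 0 < h := lt_min hrj0 (div_pos (neg_pos.2 hneg) hWpos)
      have hxmem : r j - h ∈ Set.Icc (0:ℝ) 1 := by
        constructor
        · linarith [min_le_left (r j) ((-g)/W)]
        · linarith [hr1 j]
      have hmain := hineq _ hxmem
      have h3 : h * W ≤ -g := by
        calc h * W ≤ ((-g)/W) * W :=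
              mul_le_mul_of_nonneg_right (min_le_right _ _) hWpos.le
          _ = -g := div_mul_cancel₀ _ (ne_of_gt hWpos)
      linarith [mul_le_mul_of_nonneg_left h3 hhpos.le, mul_pos hhpos (neg_pos.2 hneg), hmain]
    · -- g > 0 forces r j < 1, then a small increase of r j decreases H
      have hrj1 : r j < 1 := by
        rcases (hr1 j).lt_or_eq with h | h
        · exact h
        · exfalso
          have hgnp : g ≤ 0 := by
            rw [hg]
            apply Finset.sum_nonpos
            intro i _
            have hd1 := (hdbound r hrbox i).2
            have hEi := hE i j
            rw [Set.mem_Icc] at hEi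
            apply mul_nonpos_of_nonneg_of_nonpos (by linarith)
            rw [h]
            linarith [hEi.2]
          linarith
      set h := min (1 - r j) (g/W) with hh
      have hhpos : 0 < h := lt_min (by linarith) (div_pos hpos hWpos)
      have hxmem : r j + h ∈ Set.Icc (0:ℝ) 1 := by
        constructor
        · linarith [hr0 j]
        · linarith [min_le_left (1 - r j) (g/W)]
      have hmain := hineq _ hxmem
      have h3 : h * W ≤ g := by
        calc h * W ≤ (g/W) * W :=
              mul_le_mul_of_nonneg_right (min_le_right _ _) hWpos.le
          _ = g := div_mul_cancel₀ _ (ne_of_gt hWpos)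
      linarith [mul_le_mul_of_nonneg_left h3 hhpos.le, mul_pos hhpos hpos, hmain]
  -- conclude F r = r
  refine ⟨r, hrbox, ?_⟩
  funext j
  rw [hF]
  have hWpos : 0 < ∑ i ∈ Finset.univ.filter (fun i => A i j = true), (c₀ - d r i) :=
    hW r hrbox j
  have hnum : ∑ i ∈ Finset.univ.filter (fun i => A i j = true), (c₀ - d r i) * E i j
      = r j * ∑ i ∈ Finset.univ.filter (fun i => A i j = true), (c₀ - d r i) := by
    have hsplit : ∑ i ∈ Finset.univ.filter (fun i => A i j = true), (c₀ - d r i) * E i j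
        = (∑ i ∈ Finset.univ.filter (fun i => A i j = true), (c₀ - d r i) * (E i j - r j))
          + r j * ∑ i ∈ Finset.univ.filter (fun i => A i j = true), (c₀ - d r i) := by
      rw [Finset.mul_sum, ← Finset.sum_add_distrib]
      exact Finset.sum_congr rfl fun i _ => by ring
    rw [hsplit, key j, zero_add]
  rw [hnum, mul_div_assoc, div_self (ne_of_gt hWpos), mul_one]
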